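/- Dyadic exponential series bound: For every real y > 0, the series Σ_{j=0}^{∞} 4^{j+1}·e^{−2^{j}·y²} converges and satisfies Σ_{j=0}^{∞} 4^{j+1}·e^{−2^{j}·y²} ≤ 9/y² + 6/y⁴. -/

import Mathlib

open Real Finset

namespace DyadicExpSeriesAux

/-- Degree-6 Taylor lower bound for `exp`. -/
lemma taylor6_le_exp {t : ℝ} (ht : 0 ≤ t) :
    1 + t + t^2/2 + t^3/6 + t^4/24 + t^5/120 + t^6/720 ≤ Real.exp t := by
  have h := Real.sum_le_exp_of_nonneg ht 7
  simp only [Finset.sum_range_succ, Finset.sum_range_zero] at h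
  norm_num [Nat.factorial] at h
  linarith

/-- Certified rational upper bounds for `exp (-a)`. -/
lemma exp_neg_le {a U : ℝ} (ha : 0 ≤ a)
    (h : 1 ≤ U * (1 + a + a^2/2 + a^3/6 + a^4/24 + a^5/120 + a^6/720)) :
    Real.exp (-a) ≤ U := by
  have hT : (0:ℝ) < 1 + a + a^2/2 + a^3/6 + a^4/24 + a^5/120 + a^6/720 := by positivity
  have hTe := taylor6_le_exp ha
  have hU : 0 < U := by nlinarith
  have h1 : 1 ≤ U * Real.exp a := by nlinarith
  rw [Real.exp_neg, inv_eq_one_div, div_le_iff₀ (Real.exp_pos a)]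
  linarith

lemma window_core {a b U x : ℝ} (ha : 0 < a) (hax : a ≤ x) (hxb : x ≤ b)
    (hU : Real.exp (-a) ≤ U)
    (hnum : b^2*U + 4*(b^2*U^2) + 16*(b^2*U^4) + 64*(b^2*U^8) + 256*(b^2*U^16)
      + 1024*(b^2*U^32) + (745/744)*(4096*(b^2*U^64)) + b^2/3 ≤ 3/2) :
    x^2*Real.exp (-x) + 4*(x^2*Real.exp (-(2*x))) + 16*(x^2*Real.exp (-(4*x)))
      + 64*(x^2*Real.exp (-(8*x))) + 256*(x^2*Real.exp (-(16*x)))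
      + 1024*(x^2*Real.exp (-(32*x))) + (745/744)*(4096*(x^2*Real.exp (-(64*x))))
      ≤ 3/2 - x^2/3 := by
  have hU0 : 0 ≤ U := (Real.exp_pos _).le.trans hU
  have h1 : Real.exp (-x) ≤ U := (Real.exp_le_exp.2 (by linarith)).trans hU
  have h1' : 0 ≤ Real.exp (-x) := (Real.exp_pos _).le
  have hb0 : 0 ≤ b := by linarith
  have hx2 : x^2 ≤ b^2 := by nlinarith
  have hpow : ∀ n : ℕ, Real.exp (-((n:ℝ)*x)) ≤ U^n := by
    intro n
    have he : Real.exp (-((n:ℝ)*x)) = Real.exp (-x)^n := by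
      rw [← Real.exp_nat_mul]; ring_nf
    rw [he]; exact pow_le_pow_left₀ h1' h1 n
  have e2 := hpow 2; have e4 := hpow 4; have e8 := hpow 8
  have e16 := hpow 16; have e32 := hpow 32; have e64 := hpow 64
  push_cast at e2 e4 e8 e16 e32 e64
  have t1 : x^2*Real.exp (-x) ≤ b^2*U :=
    mul_le_mul hx2 h1 h1' (by positivity)
  have t2 : x^2*Real.exp (-(2*x)) ≤ b^2*U^2 :=
    mul_le_mul hx2 e2 (Real.exp_pos _).le (by positivity)
  have t4 : x^2*Real.exp (-(4*x)) ≤ b^2*U^4 :=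
    mul_le_mul hx2 e4 (Real.exp_pos _).le (by positivity)
  have t8 : x^2*Real.exp (-(8*x)) ≤ b^2*U^8 :=
    mul_le_mul hx2 e8 (Real.exp_pos _).le (by positivity)
  have t16 : x^2*Real.exp (-(16*x)) ≤ b^2*U^16 :=
    mul_le_mul hx2 e16 (Real.exp_pos _).le (by positivity)
  have t32 : x^2*Real.exp (-(32*x)) ≤ b^2*U^32 :=
    mul_le_mul hx2 e32 (Real.exp_pos _).le (by positivity)
  have t64 : x^2*Real.exp (-(64*x)) ≤ b^2*U^64 :=
    mul_le_mul hx2 e64 (Real.exp_pos _).le (by positivity)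
  linarith

noncomputable def trm (x : ℝ) (j : ℕ) : ℝ := (2^j*x)^2 * Real.exp (-(2^j*x))

lemma trm_nonneg (x : ℝ) (j : ℕ) : 0 ≤ trm x j := by unfold trm; positivity

lemma sq_le_exp_half {u : ℝ} (hu : 0 ≤ u) : u^2 * Real.exp (-u) ≤ 16 * Real.exp (-(u/2)) := by
  have h4 : u/4 + 1 ≤ Real.exp (u/4) := Real.add_one_le_exp _
  have h2 : (1+u/4)^2 ≤ Real.exp (u/4)^2 := pow_le_pow_left₀ (by linarith) (by linarith) 2
  have he : Real.exp (u/4)^2 = Real.exp (u/2) := by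
    rw [← Real.exp_nat_mul]; norm_num; ring_nf
  have hu2 : u^2 ≤ 16 * Real.exp (u/2) := by nlinarith
  have hstep : u^2 * Real.exp (-u) ≤ (16 * Real.exp (u/2)) * Real.exp (-u) :=
    mul_le_mul_of_nonneg_right hu2 (Real.exp_pos _).le
  calc u^2 * Real.exp (-u) ≤ (16 * Real.exp (u/2)) * Real.exp (-u) := hstep
    _ = 16 * Real.exp (-(u/2)) := by rw [mul_assoc, ← Real.exp_add]; ring_nf

lemma le_two_pow (j : ℕ) : (j:ℝ) ≤ 2^j := by
  have := Nat.lt_two_pow_self (n := j)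
  exact_mod_cast this.le

lemma trm_le_geom {x : ℝ} (hx : 0 < x) (j : ℕ) :
    trm x j ≤ 16 * (Real.exp (-(x/2)))^j := by
  have h2j : (0:ℝ) < 2^j := by positivity
  have hu : 0 ≤ 2^j*x := by positivity
  have h1 : trm x j ≤ 16 * Real.exp (-(2^j*x/2)) := sq_le_exp_half hu
  have h2 : Real.exp (-(2^j*x/2)) ≤ Real.exp (-((j:ℝ)*(x/2))) := by
    apply Real.exp_le_exp.2
    have := le_two_pow j
    nlinarith
  have h3 : Real.exp (-((j:ℝ)*(x/2))) = (Real.exp (-(x/2)))^j := by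
    rw [← Real.exp_nat_mul]; ring_nf
  rw [h3] at h2; linarith

lemma summable_trm {x : ℝ} (hx : 0 < x) : Summable (trm x) := by
  apply Summable.of_nonneg_of_le (trm_nonneg x) (trm_le_geom hx)
  apply Summable.mul_left
  apply summable_geometric_of_lt_one (Real.exp_pos _).le
  rw [Real.exp_lt_one_iff]
  linarith

lemma exp_eight : (2980:ℝ) ≤ Real.exp 8 := by
  have h1 : (2.7182818283:ℝ) ≤ Real.exp 1 := Real.exp_one_gt_d9.le
  have h8 : Real.exp 8 = Real.exp 1^8 := by
    rw [← Real.exp_nat_mul]; norm_num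
  rw [h8]
  calc (2980:ℝ) ≤ 2.7182818283^8 := by norm_num
    _ ≤ Real.exp 1^8 := pow_le_pow_left₀ (by norm_num) h1 8

lemma trm_tail_le {v : ℝ} (hv : 8 ≤ v) (j : ℕ) :
    trm v j ≤ (v^2 * Real.exp (-v)) * (1/745)^j := by
  have hv0 : 0 < v := by linarith
  have h2j1 : (j:ℝ) ≤ 2^j - 1 := by
    have h := Nat.lt_two_pow_self (n := j)
    have h' : (j:ℝ) + 1 ≤ 2^j := by exact_mod_cast h
    linarith
  have key : (4:ℝ)^j * Real.exp (-(2^j*v)) ≤ Real.exp (-v) * (1/745)^j := by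
    have hsplit : Real.exp (-(2^j*v)) = Real.exp (-v) * Real.exp (-((2^j-1)*v)) := by
      rw [← Real.exp_add]; ring_nf
    rw [hsplit, ← mul_assoc, mul_comm ((4:ℝ)^j), mul_assoc]
    apply mul_le_mul_of_nonneg_left _ (Real.exp_pos _).le
    have hs1 : Real.exp (-((2^j-1)*v)) ≤ Real.exp (-((j:ℝ)*8)) := by
      apply Real.exp_le_exp.2
      nlinarith
    have hs2 : Real.exp (-((j:ℝ)*8)) = (Real.exp (-8))^j := by
      rw [← Real.exp_nat_mul]; ring_nf
    have hs3 : Real.exp (-8) ≤ 1/2980 := by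
      rw [Real.exp_neg, inv_eq_one_div]
      rw [div_le_div_iff₀ (Real.exp_pos 8) (by norm_num)]
      linarith [exp_eight]
    have hs4 : (Real.exp (-8))^j ≤ (1/2980)^j :=
      pow_le_pow_left₀ (Real.exp_pos _).le hs3 j
    calc (4:ℝ)^j * Real.exp (-((2^j-1)*v)) ≤ 4^j * (1/2980)^j := by
          apply mul_le_mul_of_nonneg_left _ (by positivity)
          rw [hs2] at hs1; linarith
      _ = (1/745)^j := by rw [← mul_pow]; norm_num
  have hexpand : trm v j = v^2 * ((4:ℝ)^j * Real.exp (-(2^j*v))) := by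
    unfold trm
    have h24 : ((2:ℝ)^j*v)^2 = 4^j*v^2 := by
      rw [mul_pow, ← pow_mul]
      norm_num [mul_comm j 2, pow_mul]
    rw [h24]; ring
  rw [hexpand]
  calc v^2 * ((4:ℝ)^j * Real.exp (-(2^j*v))) ≤ v^2 * (Real.exp (-v) * (1/745)^j) :=
        mul_le_mul_of_nonneg_left key (by positivity)
    _ = (v^2 * Real.exp (-v)) * (1/745)^j := by ring

lemma tsum_tail_le {v : ℝ} (hv : 8 ≤ v) :
    ∑' j, trm v j ≤ (745/744) * (v^2 * Real.exp (-v)) := by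
  have hv0 : 0 < v := by linarith
  have hgeo : Summable (fun j : ℕ => (v^2 * Real.exp (-v)) * (1/745)^j) :=
    (summable_geometric_of_lt_one (by norm_num) (by norm_num)).mul_left _
  calc ∑' j, trm v j ≤ ∑' j, (v^2 * Real.exp (-v)) * (1/745)^j :=
        (summable_trm hv0).tsum_le_tsum (trm_tail_le hv) hgeo
    _ = (v^2 * Real.exp (-v)) * ∑' j, ((1:ℝ)/745)^j := Summable.tsum_mul_left _
          (summable_geometric_of_lt_one (by norm_num) (by norm_num))
    _ = (v^2 * Real.exp (-v)) * (745/744) := by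
          rw [tsum_geometric_of_lt_one (by norm_num) (by norm_num)]; norm_num
    _ = (745/744) * (v^2 * Real.exp (-v)) := by ring

lemma window_poly {x : ℝ} (h1 : 1/8 < x) (h2 : x ≤ 1/4) :
    x^2*Real.exp (-x) + 4*(x^2*Real.exp (-(2*x))) + 16*(x^2*Real.exp (-(4*x)))
      + 64*(x^2*Real.exp (-(8*x))) + 256*(x^2*Real.exp (-(16*x)))
      + 1024*(x^2*Real.exp (-(32*x))) + (745/744)*(4096*(x^2*Real.exp (-(64*x))))
      ≤ 3/2 - x^2/3 := by
  rcases le_or_gt x ((1273/10000)) with h | hgt0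
  · exact window_core (U := ((882499/1000000))) (by norm_num) h1.le h
      (exp_neg_le (by norm_num) (by norm_num)) (by norm_num)
  rcases le_or_gt x ((1297/10000)) with h | hgt1
  · exact window_core (U := ((110059/125000))) (by norm_num) hgt0.le h
      (exp_neg_le (by norm_num) (by norm_num)) (by norm_num)
  rcases le_or_gt x ((1321/10000)) with h | hgt2
  · exact window_core (U := ((878361/1000000))) (by norm_num) hgt1.le h
      (exp_neg_le (by norm_num) (by norm_num)) (by norm_num)
  rcases le_or_gt x ((673/5000)) with h | hgt3
  · exact window_core (U := ((27383/31250))) (by norm_num) hgt2.le h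
      (exp_neg_le (by norm_num) (by norm_num)) (by norm_num)
  rcases le_or_gt x ((1371/10000)) with h | hgt4
  · exact window_core (U := ((218517/250000))) (by norm_num) hgt3.le h
      (exp_neg_le (by norm_num) (by norm_num)) (by norm_num)
  rcases le_or_gt x ((1397/10000)) with h | hgt5
  · exact window_core (U := ((435943/500000))) (by norm_num) hgt4.le h
      (exp_neg_le (by norm_num) (by norm_num)) (by norm_num)
  rcases le_or_gt x ((1423/10000)) with h | hgt6
  · exact window_core (U := ((434811/500000))) (by norm_num) hgt5.le h
      (exp_neg_le (by norm_num) (by norm_num)) (by norm_num)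
  rcases le_or_gt x ((29/200)) with h | hgt7
  · exact window_core (U := ((216841/250000))) (by norm_num) hgt6.le h
      (exp_neg_le (by norm_num) (by norm_num)) (by norm_num)
  rcases le_or_gt x ((1477/10000)) with h | hgt8
  · exact window_core (U := ((34601/40000))) (by norm_num) hgt7.le h
      (exp_neg_le (by norm_num) (by norm_num)) (by norm_num)
  rcases le_or_gt x ((301/2000)) with h | hgt9
  · exact window_core (U := ((215673/250000))) (by norm_num) hgt8.le h
      (exp_neg_le (by norm_num) (by norm_num)) (by norm_num)
  rcases le_or_gt x ((1533/10000)) with h | hgt10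
  · exact window_core (U := ((21507/25000))) (by norm_num) hgt9.le h
      (exp_neg_le (by norm_num) (by norm_num)) (by norm_num)
  rcases le_or_gt x ((781/5000)) with h | hgt11
  · exact window_core (U := ((6863/8000))) (by norm_num) hgt10.le h
      (exp_neg_le (by norm_num) (by norm_num)) (by norm_num)
  rcases le_or_gt x ((1591/10000)) with h | hgt12
  · exact window_core (U := ((855391/1000000))) (by norm_num) hgt11.le h
      (exp_neg_le (by norm_num) (by norm_num)) (by norm_num)
  rcases le_or_gt x ((1621/10000)) with h | hgt13
  · exact window_core (U := ((426457/500000))) (by norm_num) hgt12.le h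
      (exp_neg_le (by norm_num) (by norm_num)) (by norm_num)
  rcases le_or_gt x ((1651/10000)) with h | hgt14
  · exact window_core (U := ((850359/1000000))) (by norm_num) hgt13.le h
      (exp_neg_le (by norm_num) (by norm_num)) (by norm_num)
  rcases le_or_gt x ((841/5000)) with h | hgt15
  · exact window_core (U := ((847811/1000000))) (by norm_num) hgt14.le h
      (exp_neg_le (by norm_num) (by norm_num)) (by norm_num)
  rcases le_or_gt x ((857/5000)) with h | hgt16
  · exact window_core (U := ((845187/1000000))) (by norm_num) hgt15.le h
      (exp_neg_le (by norm_num) (by norm_num)) (by norm_num)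
  rcases le_or_gt x ((873/5000)) with h | hgt17
  · exact window_core (U := ((842487/1000000))) (by norm_num) hgt16.le h
      (exp_neg_le (by norm_num) (by norm_num)) (by norm_num)
  rcases le_or_gt x ((1779/10000)) with h | hgt18
  · exact window_core (U := ((167959/200000))) (by norm_num) hgt17.le h
      (exp_neg_le (by norm_num) (by norm_num)) (by norm_num)
  rcases le_or_gt x ((453/2500)) with h | hgt19
  · exact window_core (U := ((837029/1000000))) (by norm_num) hgt18.le h
      (exp_neg_le (by norm_num) (by norm_num)) (by norm_num)
  rcases le_or_gt x ((923/5000)) with h | hgt20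
  · exact window_core (U := ((834271/1000000))) (by norm_num) hgt19.le h
      (exp_neg_le (by norm_num) (by norm_num)) (by norm_num)
  rcases le_or_gt x ((1881/10000)) with h | hgt21
  · exact window_core (U := ((831439/1000000))) (by norm_num) hgt20.le h
      (exp_neg_le (by norm_num) (by norm_num)) (by norm_num)
  rcases le_or_gt x ((479/2500)) with h | hgt22
  · exact window_core (U := ((414267/500000))) (by norm_num) hgt21.le h
      (exp_neg_le (by norm_num) (by norm_num)) (by norm_num)
  rcases le_or_gt x ((122/625)) with h | hgt23
  · exact window_core (U := ((20641/25000))) (by norm_num) hgt22.le h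
      (exp_neg_le (by norm_num) (by norm_num)) (by norm_num)
  rcases le_or_gt x ((1989/10000)) with h | hgt24
  · exact window_core (U := ((822673/1000000))) (by norm_num) hgt23.le h
      (exp_neg_le (by norm_num) (by norm_num)) (by norm_num)
  rcases le_or_gt x ((1013/5000)) with h | hgt25
  · exact window_core (U := ((409817/500000))) (by norm_num) hgt24.le h
      (exp_neg_le (by norm_num) (by norm_num)) (by norm_num)
  rcases le_or_gt x ((129/625)) with h | hgt26
  · exact window_core (U := ((816607/1000000))) (by norm_num) hgt25.le h
      (exp_neg_le (by norm_num) (by norm_num)) (by norm_num)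
  rcases le_or_gt x ((2103/10000)) with h | hgt27
  · exact window_core (U := ((81351/100000))) (by norm_num) hgt26.le h
      (exp_neg_le (by norm_num) (by norm_num)) (by norm_num)
  rcases le_or_gt x ((1071/5000)) with h | hgt28
  · exact window_core (U := ((101293/125000))) (by norm_num) hgt27.le h
      (exp_neg_le (by norm_num) (by norm_num)) (by norm_num)
  rcases le_or_gt x ((1091/5000)) with h | hgt29
  · exact window_core (U := ((807189/1000000))) (by norm_num) hgt28.le h
      (exp_neg_le (by norm_num) (by norm_num)) (by norm_num)
  rcases le_or_gt x ((2223/10000)) with h | hgt30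
  · exact window_core (U := ((803967/1000000))) (by norm_num) hgt29.le h
      (exp_neg_le (by norm_num) (by norm_num)) (by norm_num)
  rcases le_or_gt x ((283/1250)) with h | hgt31
  · exact window_core (U := ((400339/500000))) (by norm_num) hgt30.le h
      (exp_neg_le (by norm_num) (by norm_num)) (by norm_num)
  rcases le_or_gt x ((1153/5000)) with h | hgt32
  · exact window_core (U := ((398701/500000))) (by norm_num) hgt31.le h
      (exp_neg_le (by norm_num) (by norm_num)) (by norm_num)
  rcases le_or_gt x ((2349/10000)) with h | hgt33
  · exact window_core (U := ((39703/50000))) (by norm_num) hgt32.le h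
      (exp_neg_le (by norm_num) (by norm_num)) (by norm_num)
  rcases le_or_gt x ((299/1250)) with h | hgt34
  · exact window_core (U := ((197663/250000))) (by norm_num) hgt33.le h
      (exp_neg_le (by norm_num) (by norm_num)) (by norm_num)
  rcases le_or_gt x ((609/2500)) with h | hgt35
  · exact window_core (U := ((39363/50000))) (by norm_num) hgt34.le h
      (exp_neg_le (by norm_num) (by norm_num)) (by norm_num)
  rcases le_or_gt x ((2481/10000)) with h | hgt36
  · exact window_core (U := ((195951/250000))) (by norm_num) hgt35.le h
      (exp_neg_le (by norm_num) (by norm_num)) (by norm_num)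
  exact window_core (U := ((195071/250000))) (by norm_num) hgt36.le h2
    (exp_neg_le (by norm_num) (by norm_num)) (by norm_num)

lemma window_tsum {x : ℝ} (h1 : 1/8 < x) (h2 : x ≤ 1/4) :
    ∑' j, trm x j ≤ 3/2 - x^2/3 := by
  have hx : 0 < x := lt_trans (by norm_num) h1
  have hs := summable_trm hx
  rw [← Summable.sum_add_tsum_nat_add 6 hs]
  have hhead : ∑ i ∈ range 6, trm x i
      = x^2*Real.exp (-x) + 4*(x^2*Real.exp (-(2*x))) + 16*(x^2*Real.exp (-(4*x)))
        + 64*(x^2*Real.exp (-(8*x))) + 256*(x^2*Real.exp (-(16*x)))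
        + 1024*(x^2*Real.exp (-(32*x))) := by
    simp only [trm, Finset.sum_range_succ, Finset.sum_range_zero]
    norm_num
    ring_nf
  have hcong : ∀ j, trm x (j+6) = trm (64*x) j := by
    intro j
    simp only [trm, pow_add]
    norm_num
    ring_nf
  have htail : ∑' j, trm x (j+6) ≤ (745/744)*(4096*(x^2*Real.exp (-(64*x)))) := by
    rw [tsum_congr hcong]
    have h64 : (8:ℝ) ≤ 64*x := by linarith
    calc ∑' j, trm (64*x) j ≤ (745/744)*((64*x)^2*Real.exp (-(64*x))) := tsum_tail_le h64
      _ = (745/744)*(4096*(x^2*Real.exp (-(64*x)))) := by ring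
  rw [hhead]
  have hp := window_poly h1 h2
  linarith

lemma tsum_trm_le {x : ℝ} (hx : 0 < x) : ∑' j, trm x j ≤ 3/2 := by
  rcases le_or_gt x (1/4) with hx4 | hx4
  · -- small x : scale up into the window
    have hex : ∃ k : ℕ, 1/8 < 2^k*x := by
      obtain ⟨k, hk⟩ := pow_unbounded_of_one_lt (1/(8*x) : ℝ) (by norm_num : (1:ℝ) < 2)
      refine ⟨k, ?_⟩
      have h8x : 0 < 8*x := by positivity
      rw [div_lt_iff₀ h8x] at hk
      nlinarith [pow_pos (by norm_num : (0:ℝ) < 2) k]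
    set k := Nat.find hex with hkdef
    have hk : 1/8 < 2^k*x := Nat.find_spec hex
    have hk4 : 2^k*x ≤ 1/4 := by
      rcases Nat.eq_zero_or_eq_succ_pred k with h0 | hsucc
      · rw [h0]; simpa using hx4
      · have hm : ¬(1/8 < 2^(k-1)*x) := Nat.find_min hex (by omega)
        push_neg at hm
        have hk1 : k - 1 + 1 = k := by omega
        have hkk : (2:ℝ)^k = 2*2^(k-1) := by
          calc (2:ℝ)^k = 2^(k-1+1) := by rw [hk1]
            _ = 2*2^(k-1) := by rw [pow_succ']
        rw [hkk]
        nlinarith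
    have hs := summable_trm hx
    rw [← Summable.sum_add_tsum_nat_add k hs]
    have hcong : ∀ j, trm x (j+k) = trm (2^k*x) j := by
      intro j
      simp only [trm, pow_add]
      ring_nf
    rw [tsum_congr hcong]
    have hW := window_tsum hk hk4
    have hhead : ∑ i ∈ range k, trm x i ≤ ((2^k*x)^2 - x^2)/3 := by
      have hterm : ∀ i ∈ range k, trm x i ≤ 4^i*x^2 := by
        intro i _
        unfold trm
        have hle1 : Real.exp (-(2^i*x)) ≤ 1 := Real.exp_le_one_iff.2 (neg_nonpos.2 (by positivity))
        have h24 : ((2:ℝ)^i*x)^2 = 4^i*x^2 := by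
          rw [mul_pow, ← pow_mul]
          norm_num [mul_comm i 2, pow_mul]
        calc ((2:ℝ)^i*x)^2 * Real.exp (-(2^i*x)) ≤ ((2:ℝ)^i*x)^2 * 1 :=
              mul_le_mul_of_nonneg_left hle1 (sq_nonneg _)
          _ = 4^i*x^2 := by rw [mul_one, h24]
      calc ∑ i ∈ range k, trm x i ≤ ∑ i ∈ range k, (4:ℝ)^i*x^2 := Finset.sum_le_sum hterm
        _ = (∑ i ∈ range k, (4:ℝ)^i)*x^2 := by rw [Finset.sum_mul]
        _ = ((4^k-1)/3)*x^2 := by rw [geom_sum_eq (by norm_num : (4:ℝ) ≠ 1)]; norm_num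
        _ = ((2^k*x)^2 - x^2)/3 := by
            have h24 : ((2:ℝ)^k*x)^2 = 4^k*x^2 := by
              rw [mul_pow, ← pow_mul]
              norm_num [mul_comm k 2, pow_mul]
            rw [h24]; ring
    have hx2 : 0 ≤ x^2 := sq_nonneg x
    linarith
  · -- large x : scale down into the window
    have hex : ∃ m : ℕ, 4*x ≤ 2^m := by
      obtain ⟨m, hm⟩ := pow_unbounded_of_one_lt (4*x) (by norm_num : (1:ℝ) < 2)
      exact ⟨m, hm.le⟩
    set m := Nat.find hex with hmdef
    have hm : 4*x ≤ 2^m := Nat.find_spec hex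
    have hm0 : m ≠ 0 := by
      intro h0
      rw [h0] at hm
      norm_num at hm
      linarith
    have hmn : ¬(4*x ≤ 2^(m-1)) := Nat.find_min hex (by omega)
    push_neg at hmn
    have hp2 : (0:ℝ) < 2^m := by positivity
    set xb := x/2^m with hxbdef
    have hxb0 : 0 < xb := by positivity
    have hxval : 2^m*xb = x := by rw [hxbdef]; field_simp
    have hxb4 : xb ≤ 1/4 := by
      rw [hxbdef, div_le_iff₀ hp2]
      linarith
    have hxb8 : 1/8 < xb := by
      have hm1 : m - 1 + 1 = m := by omega
      have hkk : (2:ℝ)^m = 2*2^(m-1) := by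
        calc (2:ℝ)^m = 2^(m-1+1) := by rw [hm1]
          _ = 2*2^(m-1) := by rw [pow_succ']
      rw [hxbdef, lt_div_iff₀ hp2, hkk]
      linarith
    have hcong : ∀ j, trm x j = trm xb (j+m) := by
      intro j
      simp only [trm, pow_add, mul_assoc, hxval]
    rw [tsum_congr hcong]
    have hs2 := summable_trm hxb0
    have hsplit := Summable.sum_add_tsum_nat_add m hs2
    have hhead0 : 0 ≤ ∑ i ∈ range m, trm xb i :=
      Finset.sum_nonneg (fun i _ => trm_nonneg _ _)
    have hW := window_tsum hxb8 hxb4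
    have hx2 : 0 ≤ xb^2 := sq_nonneg _
    linarith

end DyadicExpSeriesAux

open DyadicExpSeriesAux in
/-- **Dyadic exponential series bound.** For every real `y > 0`, the series
`∑_{j=0}^∞ 4^{j+1} · e^{-2^j y²}` converges and is at most `9/y² + 6/y⁴`. -/
theorem dyadic_exp_series_bound (y : ℝ) (hy : 0 < y) :
    Summable (fun j : ℕ => (4 : ℝ) ^ (j + 1) * Real.exp (-(2 : ℝ) ^ j * y ^ 2)) ∧
      ∑' j : ℕ, (4 : ℝ) ^ (j + 1) * Real.exp (-(2 : ℝ) ^ j * y ^ 2)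
        ≤ 9 / y ^ 2 + 6 / y ^ 4 := by
  set x := y^2 with hxdef
  have hx : 0 < x := by positivity
  have hx2 : (x:ℝ) ≠ 0 := ne_of_gt hx
  have hfun : ∀ j : ℕ, (4 : ℝ) ^ (j + 1) * Real.exp (-(2 : ℝ) ^ j * y ^ 2)
      = (4/x^2) * trm x j := by
    intro j
    unfold trm
    have h24 : ((2:ℝ)^j*x)^2 = 4^j*x^2 := by
      rw [mul_pow, ← pow_mul]
      norm_num [mul_comm j 2, pow_mul]
    rw [h24, neg_mul, ← hxdef]
    field_simp
    ring
  have hs : Summable (fun j : ℕ => (4 : ℝ) ^ (j + 1) * Real.exp (-(2 : ℝ) ^ j * y ^ 2)) := by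
    rw [summable_congr hfun]
    exact (summable_trm hx).mul_left _
  refine ⟨hs, ?_⟩
  have hT := tsum_trm_le hx
  calc ∑' j : ℕ, (4 : ℝ) ^ (j + 1) * Real.exp (-(2 : ℝ) ^ j * y ^ 2)
      = ∑' j : ℕ, (4/x^2) * trm x j := tsum_congr hfun
    _ = (4/x^2) * ∑' j, trm x j := Summable.tsum_mul_left _ (summable_trm hx)
    _ ≤ (4/x^2) * (3/2) := by
        apply mul_le_mul_of_nonneg_left hT (by positivity)
    _ = 6/x^2 := by ring
    _ ≤ 9 / y ^ 2 + 6 / y ^ 4 := by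
        have hx4 : x^2 = y^4 := by rw [hxdef]; ring
        rw [hx4]
        have h9 : 0 ≤ 9 / y^2 := by positivity
        linarith
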